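/- Let Γ be an abelian group, K a field, ε a commutation factor on Γ over K, D a natural number, and φ : Fin D → Γ. A linear form T : M_D(K) → K satisfies the ε-trace property T(E_{ij}·E_{kl}) = ε(φ(i) − φ(j), φ(k) − φ(l))·T(E_{kl}·E_{ij}) for all indices i, j, k, l if and only if there exists λ ∈ K such that T = λ·tr_ε, where tr_ε(A) = Σ_i ε(φ(i), φ(i))·A_{ii}. In particular the space of ε-traces on the elementary ε-graded matrix algebra is one-dimensional, spanned by tr_ε. -/

import Mathlib

/-- A commutation factor on an abelian group `Γ` over a field `K`. -/
def IsCommFactor {Γ K : Type*} [AddCommGroup Γ] [Field K] (ε : Γ → Γ → Kˣ) : Prop :=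
  (∀ i j, ε i j * ε j i = 1) ∧
  (∀ i j k, ε i (j + k) = ε i j * ε i k) ∧
  (∀ i j k, ε (i + j) k = ε i k * ε j k)

section aux

variable {Γ K : Type*} [AddCommGroup Γ] [Field K] {ε : Γ → Γ → Kˣ}

lemma commFactor_right_zero (hε : IsCommFactor ε) (a : Γ) : ε a 0 = 1 := by
  have h := hε.2.1 a 0 0
  simp only [add_zero] at h
  exact (mul_eq_left (a := ε a 0)).mp h.symm

lemma commFactor_left_zero (hε : IsCommFactor ε) (a : Γ) : ε 0 a = 1 := by
  have h := hε.2.2 0 0 a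
  simp only [add_zero] at h
  exact (mul_eq_left (a := ε 0 a)).mp h.symm

lemma commFactor_right_neg (hε : IsCommFactor ε) (a b : Γ) : ε a (-b) = (ε a b)⁻¹ := by
  have h := hε.2.1 a b (-b)
  rw [add_neg_cancel, commFactor_right_zero hε] at h
  exact eq_inv_of_mul_eq_one_right h.symm

lemma commFactor_left_neg (hε : IsCommFactor ε) (a b : Γ) : ε (-a) b = (ε a b)⁻¹ := by
  have h := hε.2.2 a (-a) b
  rw [add_neg_cancel, commFactor_left_zero hε] at h
  have h2 : ε (-a) b * ε a b = 1 := by rw [mul_comm]; exact h.symm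
  exact eq_inv_of_mul_eq_one_left h2

lemma commFactor_diag_sq (hε : IsCommFactor ε) (a : Γ) : ε a a * ε a a = 1 := hε.1 a a

lemma commFactor_diag_inv (hε : IsCommFactor ε) (a : Γ) : (ε a a)⁻¹ = ε a a :=
  inv_eq_of_mul_eq_one_right (commFactor_diag_sq hε a)

lemma commFactor_key (hε : IsCommFactor ε) (a b : Γ) :
    ε (a - b) (b - a) = ε a a * ε b b := by
  have e2 : ε a (b - a) = ε a b * (ε a a)⁻¹ := by
    rw [sub_eq_add_neg, hε.2.1, commFactor_right_neg hε]
  have e3 : ε (-b) (b - a) = ((ε b b) * (ε b a)⁻¹)⁻¹ := by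
    rw [commFactor_left_neg hε, sub_eq_add_neg, hε.2.1, commFactor_right_neg hε]
  have e1 : ε (a - b) (b - a) = ε a (b - a) * ε (-b) (b - a) := by
    rw [sub_eq_add_neg a b, hε.2.2]
  have hba : ε b a = (ε a b)⁻¹ := eq_inv_of_mul_eq_one_left (by rw [mul_comm]; exact hε.1 a b)
  rw [e1, e2, e3, hba, inv_inv, mul_inv, commFactor_diag_inv hε a, commFactor_diag_inv hε b]
  simp [mul_comm, mul_left_comm, mul_assoc]

end aux

theorem statement10 {Γ K : Type*} [AddCommGroup Γ] [Field K]
    (ε : Γ → Γ → Kˣ) (hε : IsCommFactor ε)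
    (D : ℕ) (φ : Fin D → Γ)
    (T : Matrix (Fin D) (Fin D) K →ₗ[K] K) :
    (∀ i j k l : Fin D,
      T (Matrix.single i j 1 * Matrix.single k l 1) =
      (ε (φ i - φ j) (φ k - φ l) : K) *
        T (Matrix.single k l 1 * Matrix.single i j 1)) ↔
    (∃ lam : K, ∀ A : Matrix (Fin D) (Fin D) K,
      T A = lam * ∑ i, (ε (φ i) (φ i) : K) * A i i) := by
  have entry : ∀ a b m : Fin D, (Matrix.single a b (1:K)) m m
      = if a = m ∧ b = m then 1 else 0 := by
    intro a b m
    simp [Matrix.single]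
  have hsq : ∀ a : Γ, (ε a a : K) * (ε a a : K) = 1 := by
    intro a
    rw [← Units.val_mul, commFactor_diag_sq hε, Units.val_one]
  constructor
  · intro h
    have hoff : ∀ i j : Fin D, i ≠ j → T (Matrix.single i j 1) = 0 := by
      intro i j hij
      have h0 := h i j j j
      rw [Matrix.single_mul_single_same, one_mul,
        Matrix.single_mul_single_of_ne (h := (Ne.symm hij)) (d := 1), map_zero, mul_zero] at h0
      exact h0
    have hdiag : ∀ i j : Fin D,
        T (Matrix.single i i 1) =
          (ε (φ i) (φ i) : K) * (ε (φ j) (φ j) : K) * T (Matrix.single j j 1) := by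
      intro i j
      have h0 := h i j j i
      rw [Matrix.single_mul_single_same, Matrix.single_mul_single_same, one_mul,
        commFactor_key hε (φ i) (φ j)] at h0
      rw [h0]
      push_cast
      ring
    rcases Nat.eq_zero_or_pos D with hD | hD
    · refine ⟨0, fun A => ?_⟩
      subst hD
      have : A = 0 := Subsingleton.elim _ _
      simp [this]
    · have p : Fin D := ⟨0, hD⟩
      refine ⟨(ε (φ p) (φ p) : K) * T (Matrix.single p p 1), fun A => ?_⟩
      conv_lhs => rw [Matrix.matrix_eq_sum_single A]
      rw [map_sum]
      have hterm : ∀ i : Fin D,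
          T (∑ j, Matrix.single i j (A i j)) =
            A i i * T (Matrix.single i i 1) := by
        intro i
        rw [map_sum, Finset.sum_eq_single i]
        · have : Matrix.single i i (A i i) = A i i • Matrix.single i i 1 := by
            rw [Matrix.smul_single, smul_eq_mul, mul_one]
          rw [this, map_smul, smul_eq_mul]
        · intro j _ hji
          have : Matrix.single i j (A i j) = A i j • Matrix.single i j 1 := by
            rw [Matrix.smul_single, smul_eq_mul, mul_one]
          rw [this, map_smul, smul_eq_mul, hoff i j (Ne.symm hji), mul_zero]
        · intro hi; exact absurd (Finset.mem_univ i) hi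
      rw [Finset.sum_congr rfl (fun i _ => hterm i), Finset.mul_sum]
      refine Finset.sum_congr rfl (fun i _ => ?_)
      rw [hdiag i p]
      ring
  · rintro ⟨lam, hlam⟩
    have hT : ∀ a b : Fin D,
        T (Matrix.single a b 1) =
          if a = b then lam * (ε (φ a) (φ a) : K) else 0 := by
      intro a b
      rw [hlam]
      simp only [entry]
      by_cases hab : a = b
      · subst hab
        rw [if_pos rfl]
        rw [Finset.sum_congr rfl (fun m _ => by
          rw [show ((if a = m ∧ a = m then (1:K) else 0)) = if a = m then 1 else 0 by
            simp [and_self]])]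
        simp [Finset.sum_ite_eq]
      · rw [if_neg hab, Finset.sum_eq_zero, mul_zero]
        intro m _
        rw [if_neg, mul_zero]
        rintro ⟨rfl, rfl⟩
        exact hab rfl
    intro i j k l
    by_cases hjk : j = k
    · rw [← hjk]
      rw [Matrix.single_mul_single_same, one_mul]
      by_cases hli : l = i
      · rw [hli]
        rw [Matrix.single_mul_single_same, one_mul, hT i i, hT j j, if_pos rfl, if_pos rfl,
          commFactor_key hε (φ i) (φ j)]
        push_cast
        linear_combination (-lam * (ε (φ i) (φ i) : K)) * hsq (φ j)
      · rw [Matrix.single_mul_single_of_ne (h := hli) (d := 1), hT i l,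
          if_neg (fun hh : i = l => hli hh.symm), map_zero, mul_zero]
    · rw [Matrix.single_mul_single_of_ne (h := hjk) (d := 1), map_zero]
      by_cases hli : l = i
      · rw [hli]
        rw [Matrix.single_mul_single_same, one_mul, hT k j,
          if_neg (fun hh : k = j => hjk hh.symm), mul_zero]
      · rw [Matrix.single_mul_single_of_ne (h := hli) (d := 1), map_zero, mul_zero]
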